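/- Let B be a C*-algebra of stable rank 1, let s be a positive element of B, let n ≥ 1, and let p be a projection in M_n(B) that is Cuntz subequivalent in M_n(B) to the block-diagonal element diag(s, 0, …, 0). Then there exists x ∈ M_n(B) with x*x = p and xx* = diag(q, 0, …, 0) for some projection q ∈ B; in particular, p is Murray–von Neumann equivalent in M_n(B) to a projection living in the (1,1) corner B. -/

import Mathlib

open Filter Topology Matrix

/-- `a` is Cuntz subequivalent to `b`: there is a sequence `dₖ` with `dₖ b dₖ* → a`. -/
def CuntzSubequivalent {D : Type*} [NonUnitalRing D] [TopologicalSpace D] [Star D]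
    (a b : D) : Prop :=
  ∃ d : ℕ → D, Tendsto (fun k => d k * b * star (d k)) atTop (𝓝 a)

/-- A C*-algebra has stable rank one if the invertible elements of its minimal
unitization are dense. -/
def StableRankOne (B : Type*) [NonUnitalCStarAlgebra B] : Prop :=
  Dense {x : Unitization ℂ B | IsUnit x}

section Helpers

variable {n : ℕ} {C : Type*}

/-- Auxiliary ℓ¹-type norm function on matrices (not an instance). -/
noncomputable def matN [SeminormedAddCommGroup C] (m : Matrix (Fin n) (Fin n) C) : ℝ :=
  ∑ i, ∑ j, ‖m i j‖

section SGroup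

variable [SeminormedAddCommGroup C]

lemma matN_continuous : Continuous (matN : Matrix (Fin n) (Fin n) C → ℝ) := by
  refine continuous_finset_sum _ fun i _ => continuous_finset_sum _ fun j _ => ?_
  exact (continuous_id.matrix_elem i j).norm

lemma matN_smul [NormedSpace ℂ C] (r : ℂ) (m : Matrix (Fin n) (Fin n) C) :
    matN (r • m) = ‖r‖ * matN m := by
  simp [matN, norm_smul, Finset.mul_sum]

lemma matN_zero : matN (0 : Matrix (Fin n) (Fin n) C) = 0 := by simp [matN]

end SGroup

variable [NonUnitalNormedRing C]

lemma matN_nonneg (m : Matrix (Fin n) (Fin n) C) : 0 ≤ matN m :=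
  Finset.sum_nonneg fun _ _ => Finset.sum_nonneg fun _ _ => norm_nonneg _

lemma norm_entry_le_matN (m : Matrix (Fin n) (Fin n) C) (i j : Fin n) : ‖m i j‖ ≤ matN m := by
  have h1 : ‖m i j‖ ≤ ∑ j', ‖m i j'‖ :=
    Finset.single_le_sum (fun _ _ => norm_nonneg _) (Finset.mem_univ j)
  refine h1.trans ?_
  exact Finset.single_le_sum (f := fun i' => ∑ j', ‖m i' j'‖)
    (fun _ _ => Finset.sum_nonneg fun _ _ => norm_nonneg _) (Finset.mem_univ i)

lemma matN_neg (m : Matrix (Fin n) (Fin n) C) : matN (-m) = matN m := by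
  simp [matN]

lemma matN_sub_rev (a b : Matrix (Fin n) (Fin n) C) : matN (a - b) = matN (b - a) := by
  rw [← matN_neg (a - b), neg_sub]

lemma matN_add_le (a b : Matrix (Fin n) (Fin n) C) : matN (a + b) ≤ matN a + matN b := by
  unfold matN
  rw [← Finset.sum_add_distrib]
  refine Finset.sum_le_sum fun i _ => ?_
  rw [← Finset.sum_add_distrib]
  exact Finset.sum_le_sum fun j _ => norm_add_le _ _

lemma matN_sub_le (a b : Matrix (Fin n) (Fin n) C) : matN (a - b) ≤ matN a + matN b := by
  rw [sub_eq_add_neg]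
  exact (matN_add_le _ _).trans (by rw [matN_neg])

lemma matN_row_le (m : Matrix (Fin n) (Fin n) C) (i : Fin n) : ∑ j, ‖m i j‖ ≤ matN m :=
  Finset.single_le_sum (f := fun i' => ∑ j', ‖m i' j'‖)
    (fun _ _ => Finset.sum_nonneg fun _ _ => norm_nonneg _) (Finset.mem_univ i)

lemma matN_mul_le (a b : Matrix (Fin n) (Fin n) C) : matN (a * b) ≤ matN a * matN b := by
  have h1 : matN (a * b) ≤ ∑ i, ∑ j, ∑ k, ‖a i k‖ * ‖b k j‖ := by
    unfold matN
    refine Finset.sum_le_sum fun i _ => Finset.sum_le_sum fun j _ => ?_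
    rw [Matrix.mul_apply]
    refine (norm_sum_le _ _).trans ?_
    exact Finset.sum_le_sum fun k _ => norm_mul_le _ _
  refine h1.trans ?_
  have h2 : ∀ i, ∑ j, ∑ k, ‖a i k‖ * ‖b k j‖ = ∑ k, ‖a i k‖ * ∑ j, ‖b k j‖ := by
    intro i
    rw [Finset.sum_comm]
    exact Finset.sum_congr rfl fun k _ => by rw [Finset.mul_sum]
  calc ∑ i, ∑ j, ∑ k, ‖a i k‖ * ‖b k j‖ = ∑ i, ∑ k, ‖a i k‖ * ∑ j, ‖b k j‖ := by
        exact Finset.sum_congr rfl fun i _ => h2 i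
    _ ≤ ∑ i, ∑ k, ‖a i k‖ * matN b := by
        refine Finset.sum_le_sum fun i _ => Finset.sum_le_sum fun k _ => ?_
        exact mul_le_mul_of_nonneg_left (matN_row_le b k) (norm_nonneg _)
    _ = matN a * matN b := by
        unfold matN
        rw [Finset.sum_mul]
        exact Finset.sum_congr rfl fun i _ => (Finset.sum_mul _ _ _).symm

lemma isClosed_goodSet [StarRing C] [ContinuousStar C]
    (r : ℝ) (g₁ g₂ : Matrix (Fin n) (Fin n) C) :
    IsClosed {z : Matrix (Fin n) (Fin n) C |
      matN z ≤ r ∧ star z = z ∧ z * g₁ = g₁ * z ∧ z * g₂ = g₂ * z} := by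
  have h1 : IsClosed {z : Matrix (Fin n) (Fin n) C | matN z ≤ r} :=
    isClosed_le matN_continuous continuous_const
  have h2 : IsClosed {z : Matrix (Fin n) (Fin n) C | star z = z} :=
    isClosed_eq ((continuous_id (X := Matrix (Fin n) (Fin n) C)).matrix_conjTranspose)
      continuous_id
  have h3 : IsClosed {z : Matrix (Fin n) (Fin n) C | z * g₁ = g₁ * z} :=
    isClosed_eq (continuous_id.matrix_mul continuous_const)
      (continuous_const.matrix_mul continuous_id)
  have h4 : IsClosed {z : Matrix (Fin n) (Fin n) C | z * g₂ = g₂ * z} :=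
    isClosed_eq (continuous_id.matrix_mul continuous_const)
      (continuous_const.matrix_mul continuous_id)
  simp only [Set.setOf_and]
  exact h1.inter (h2.inter (h3.inter h4))

set_option maxHeartbeats 1000000 in
/-- Bespoke Banach fixed point theorem for matrices over a complete normed ring,
using the auxiliary norm `matN`. -/
lemma exists_matrix_fixedPoint [CompleteSpace C]
    (S : Set (Matrix (Fin n) (Fin n) C)) (hS : IsClosed S)
    (h0 : (0 : Matrix (Fin n) (Fin n) C) ∈ S)
    (F : Matrix (Fin n) (Fin n) C → Matrix (Fin n) (Fin n) C) (hF : Continuous F)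
    (hFS : ∀ z ∈ S, F z ∈ S) (K : ℝ) (hK0 : 0 ≤ K) (hK1 : K < 1)
    (hlip : ∀ z ∈ S, ∀ z' ∈ S, matN (F z - F z') ≤ K * matN (z - z')) :
    ∃ z ∈ S, F z = z := by
  have hseqS : ∀ m, F^[m] 0 ∈ S := by
    intro m
    induction m with
    | zero => exact h0
    | succ m ih => rw [Function.iterate_succ_apply']; exact hFS _ ih
  have hsucc : ∀ m, F^[m + 1] (0 : Matrix (Fin n) (Fin n) C) = F (F^[m] 0) := fun m =>
    Function.iterate_succ_apply' F m 0
  have hgeo : ∀ m, matN (F^[m + 1] (0 : Matrix (Fin n) (Fin n) C) - F^[m] 0) ≤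
      matN (F^[1] (0 : Matrix (Fin n) (Fin n) C) - F^[0] 0) * K ^ m := by
    intro m
    induction m with
    | zero => simp
    | succ m ih =>
        have key := hlip _ (hseqS (m + 1)) _ (hseqS m)
        rw [← hsucc m] at key
        rw [← hsucc (m + 1)] at key
        refine key.trans ?_
        calc K * matN (F^[m + 1] (0 : Matrix (Fin n) (Fin n) C) - F^[m] 0)
            ≤ K * (matN (F^[1] (0 : Matrix (Fin n) (Fin n) C) - F^[0] 0) * K ^ m) :=
              mul_le_mul_of_nonneg_left ih hK0
          _ = matN (F^[1] (0 : Matrix (Fin n) (Fin n) C) - F^[0] 0) * K ^ (m + 1) := by ring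
  have hcauchy : ∀ i j, ∃ l : C, Tendsto (fun m => F^[m] (0 : Matrix (Fin n) (Fin n) C) i j)
      atTop (𝓝 l) := by
    intro i j
    apply cauchySeq_tendsto_of_complete
    apply cauchySeq_of_le_geometric K (matN (F^[1] (0 : Matrix (Fin n) (Fin n) C) - F^[0] 0)) hK1
    intro m
    rw [dist_eq_norm]
    calc ‖F^[m] (0 : Matrix (Fin n) (Fin n) C) i j - F^[m + 1] 0 i j‖
        = ‖(F^[m + 1] (0 : Matrix (Fin n) (Fin n) C) - F^[m] 0) i j‖ := by
          rw [Matrix.sub_apply, norm_sub_rev]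
      _ ≤ matN (F^[m + 1] (0 : Matrix (Fin n) (Fin n) C) - F^[m] 0) := norm_entry_le_matN _ i j
      _ ≤ matN (F^[1] (0 : Matrix (Fin n) (Fin n) C) - F^[0] 0) * K ^ m := hgeo m
  choose l hl using hcauchy
  have htend : Tendsto (fun m => F^[m] (0 : Matrix (Fin n) (Fin n) C)) atTop
      (𝓝 (Matrix.of l)) := by
    refine tendsto_pi_nhds.2 ?_
    intro i
    refine tendsto_pi_nhds.2 ?_
    intro j
    exact hl i j
  refine ⟨Matrix.of l, hS.mem_of_tendsto htend (Eventually.of_forall hseqS), ?_⟩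
  have h1 : Tendsto (fun m => F (F^[m] (0 : Matrix (Fin n) (Fin n) C))) atTop
      (𝓝 (F (Matrix.of l))) := (hF.tendsto _).comp htend
  have h2 : Tendsto (fun m => F^[m + 1] (0 : Matrix (Fin n) (Fin n) C)) atTop
      (𝓝 (Matrix.of l)) := htend.comp (tendsto_add_atTop_nat 1)
  have h3 : (fun m => F (F^[m] (0 : Matrix (Fin n) (Fin n) C))) =
      fun m => F^[m + 1] (0 : Matrix (Fin n) (Fin n) C) := by
    funext m; rw [hsucc m]
  rw [h3] at h1
  exact tendsto_nhds_unique h1 h2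

end Helpers

section StdBasisHelpers

variable {n : ℕ} {B : Type*} [NonUnitalRing B] (i0 : Fin n)

lemma stdBasis_star [StarRing B] (a : B) :
    star (Matrix.single i0 i0 a) = Matrix.single i0 i0 (star a) := by
  ext i j
  rw [Matrix.star_apply]
  by_cases h : i0 = i ∧ i0 = j
  · obtain ⟨h1, h2⟩ := h; subst h1; subst h2; simp
  · have h' : ¬(i0 = j ∧ i0 = i) := fun hc => h ⟨hc.2, hc.1⟩
    rw [Matrix.single_apply_of_ne _ _ _ _ _ h',
      Matrix.single_apply_of_ne _ _ _ _ _ h, star_zero]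

lemma corner_mul (a a' : B) (h : Matrix (Fin n) (Fin n) B) :
    Matrix.single i0 i0 a * h * Matrix.single i0 i0 a'
      = Matrix.single i0 i0 (a * h i0 i0 * a') := by
  ext i j
  by_cases hi : i = i0 <;> by_cases hj : j = i0
  · subst hi; subst hj; simp
  · subst hi
    rw [Matrix.mul_single_apply_of_ne _ _ _ _ _ hj,
      Matrix.single_apply_of_ne]
    exact fun hc => hj hc.2.symm
  · subst hj
    rw [Matrix.mul_single_apply_same,
      Matrix.single_mul_apply_of_ne _ _ _ _ _ hi, zero_mul,
      Matrix.single_apply_of_ne]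
    exact fun hc => hi hc.1.symm
  · rw [Matrix.mul_single_apply_of_ne _ _ _ _ _ hj,
      Matrix.single_apply_of_ne]
    exact fun hc => hj hc.2.symm

end StdBasisHelpers

section UnitizationCalc

variable {A : Type*} [NonUnitalRing A] [Module ℂ A] [SMulCommClass ℂ A A]
  [IsScalarTower ℂ A A] [StarRing A] [StarModule ℂ A]

/-- The core algebraic computation, carried out in the unitization. -/
lemma unitization_calc (p c e ζ m w : A)
    (hpidem : p * p = p) (hpsa : star p = p)
    (he : e = p - p * c * p)
    (hζfix : e * ζ + e = ζ) (hζe : ζ * e = e * ζ)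
    (hmZ : m * ζ = ζ * m) (hmp : m * p = p * m) (hmsa : star m = m)
    (hm2 : m + m + m * m = ζ)
    (hw : star w * w = c) :
    star (w * p + w * p * m) * (w * p + w * p * m) = p ∧
    (w * p + w * p * m) * star (w * p + w * p * m) = w * (p + p * ζ * p) * star w ∧
    (w * p + w * p * m) * p = w * p + w * p * m := by
  set x : A := w * p + w * p * m with hx
  set U := Unitization ℂ A
  let J : A → U := fun a => (a : U)
  have hJmul : ∀ a b : A, J (a * b) = J a * J b := fun a b => Unitization.inr_mul ℂ a b
  have hJadd : ∀ a b : A, J (a + b) = J a + J b := fun a b => Unitization.inr_add ℂ a b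
  have hJsub : ∀ a b : A, J (a - b) = J a - J b := fun a b => Unitization.inr_sub ℂ a b
  have hJstar : ∀ a : A, J (star a) = star (J a) := fun a => Unitization.inr_star a
  have hJinj : Function.Injective J := Unitization.inr_injective (R := ℂ)
  set P : U := J p with hP
  set E : U := J e with hE
  set Z : U := J ζ with hZ
  set M : U := J m with hM
  set W : U := J w with hW
  set v : U := 1 + M with hv
  set u : U := 1 - E with hu
  set u' : U := 1 + Z with hu'
  have hPP : P * P = P := by rw [hP, ← hJmul, hpidem]
  have hPsa : star P = P := by rw [hP, ← hJstar, hpsa]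
  have hMP : M * P = P * M := by rw [hM, hP, ← hJmul, ← hJmul, hmp]
  have hMZ : M * Z = Z * M := by rw [hM, hZ, ← hJmul, ← hJmul, hmZ]
  have hZE : Z * E = E * Z := by rw [hZ, hE, ← hJmul, ← hJmul, hζe]
  have hMsa : star M = M := by rw [hM, ← hJstar, hmsa]
  have hEZ : E * Z + E = Z := by rw [hE, hZ, ← hJmul, ← hJadd, hζfix]
  have hM2 : M + M + M * M = Z := by rw [hM, hZ, ← hJmul, ← hJadd, ← hJadd, hm2]
  have hvP : v * P = P * v := by rw [hv, add_mul, mul_add, one_mul, mul_one, hMP]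
  have huu' : u * u' = 1 := by
    have expand : u * u' = 1 + (Z - (E * Z + E)) := by
      rw [hu, hu']; simp only [sub_mul, mul_sub, add_mul, mul_add, one_mul, mul_one]; abel
    rw [expand, hEZ, sub_self, add_zero]
  have hu'u : u' * u = 1 := by
    have expand : u' * u = 1 + (Z - (Z * E + E)) := by
      rw [hu, hu']; simp only [sub_mul, mul_sub, add_mul, mul_add, one_mul, mul_one]; abel
    rw [expand, hZE, hEZ, sub_self, add_zero]
  have hv2 : v * v = u' := by
    have expand : v * v = 1 + (M + M + M * M) := by rw [hv]; noncomm_ring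
    rw [expand, hM2, hu']
  have hvu' : v * u' = u' * v := by
    have expand1 : v * u' = 1 + M + Z + M * Z := by rw [hv, hu']; noncomm_ring
    have expand2 : u' * v = 1 + M + Z + Z * M := by rw [hv, hu']; noncomm_ring
    rw [expand1, expand2, hMZ]
  have hvu : v * u = u * v := by
    calc v * u = (u * u') * (v * u) := by rw [huu', one_mul]
      _ = u * (u' * v) * u := by simp only [mul_assoc]
      _ = u * (v * u') * u := by rw [hvu']
      _ = (u * v) * (u' * u) := by simp only [mul_assoc]
      _ = u * v := by rw [hu'u, mul_one]
  set t : A := p * c * p with ht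
  have htp : t * p = t := by rw [ht, mul_assoc, hpidem]
  have hpt : p * t = t := by rw [ht, ← mul_assoc, ← mul_assoc, hpidem]
  have hep : e * p = p - t := by rw [he, sub_mul, hpidem, htp]
  have hpe : p * e = p - t := by rw [he, mul_sub, hpidem, hpt]
  have huP : u * P = J t := by
    rw [hu, sub_mul, one_mul, hE, hP, ← hJmul, hep, hJsub]
    rw [sub_sub_cancel]
  have hX : J x = W * P * v := by
    rw [hx, hJadd, hJmul, hJmul, hJmul, ← hP, ← hM, ← hW, hv, mul_add, mul_one]
  have hXstar : J (star x) = v * (P * star W) := by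
    rw [hJstar, hX, StarMul.star_mul, StarMul.star_mul, hPsa, hv, star_add, star_one, hMsa]
  have hWW : star W * W = J c := by rw [hW, ← hJstar, ← hJmul, hw]
  have main1 : J (star x * x) = P := by
    rw [hJmul, hXstar, hX]
    calc v * (P * star W) * (W * P * v)
        = v * (P * (star W * W) * P) * v := by simp only [mul_assoc]
      _ = v * (P * J c * P) * v := by rw [hWW]
      _ = v * (J t) * v := by rw [hP, ← hJmul, ← hJmul, ← ht]
      _ = v * (u * P) * v := by rw [huP]
      _ = v * u * (P * v) := by simp only [mul_assoc]
      _ = v * u * (v * P) := by rw [hvP]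
      _ = (v * u) * v * P := by simp only [mul_assoc]
      _ = (u * v) * v * P := by rw [hvu]
      _ = u * (v * v) * P := by simp only [mul_assoc]
      _ = u * u' * P := by rw [hv2]
      _ = P := by rw [huu', one_mul]
  have fact1 : star x * x = p := hJinj (by rw [main1, hP])
  have hPu'P : P * u' * P = J (p + p * ζ * p) := by
    rw [hu', mul_add, mul_one, add_mul, hPP, hP, hZ, ← hJmul, ← hJmul, ← hJadd]
  have main2 : J (x * star x) = J (w * (p + p * ζ * p) * star w) := by
    rw [hJmul, hX, hXstar]
    calc W * P * v * (v * (P * star W))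
        = W * (P * (v * v) * P) * star W := by simp only [mul_assoc]
      _ = W * (P * u' * P) * star W := by rw [hv2]
      _ = W * J (p + p * ζ * p) * star W := by rw [hPu'P]
      _ = J (w * (p + p * ζ * p) * star w) := by
          rw [hJmul, hJmul, hJstar, ← hW]
  have fact2 : x * star x = w * (p + p * ζ * p) * star w := hJinj main2
  have main3 : J (x * p) = J x := by
    rw [hJmul, hX, ← hP]
    calc W * P * v * P = W * P * (v * P) := by simp only [mul_assoc]
      _ = W * P * (P * v) := by rw [hvP]
      _ = W * (P * P) * v := by simp only [mul_assoc]
      _ = W * P * v := by rw [hPP]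
  exact ⟨fact1, fact2, hJinj main3⟩

end UnitizationCalc

set_option maxHeartbeats 4000000 in
/-- If `B` has stable rank one, `s ∈ B` is positive, and `p` is a projection in
`Mₙ(B)` Cuntz subequivalent to `diag(s, 0, …, 0)`, then `p` is Murray–von Neumann
equivalent to a projection `q` sitting in the `(1,1)` corner of `Mₙ(B)`. -/
theorem projection_mvN_equivalent_corner
    {B : Type*} [NonUnitalCStarAlgebra B] [PartialOrder B] [StarOrderedRing B]
    (hB : StableRankOne B) (s : B) (hs : 0 ≤ s)
    {n : ℕ} (hn : 0 < n) (p : Matrix (Fin n) (Fin n) B)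
    (hp : IsSelfAdjoint p ∧ IsIdempotentElem p)
    (h : CuntzSubequivalent p (Matrix.single ⟨0, hn⟩ ⟨0, hn⟩ s)) :
    ∃ (x : Matrix (Fin n) (Fin n) B) (q : B),
      IsSelfAdjoint q ∧ IsIdempotentElem q ∧
      star x * x = p ∧ x * star x = Matrix.single ⟨0, hn⟩ ⟨0, hn⟩ q := by
  obtain ⟨hpsa', hpidem⟩ := hp
  have hpsa : star p = p := hpsa'.star_eq
  obtain ⟨d, hd⟩ := h
  set i0 : Fin n := ⟨0, hn⟩ with hi0
  -- the square root of s
  set sr : B := CFC.sqrt s with hsrdef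
  have hsrmul : sr * sr = s := CFC.sqrt_mul_sqrt_self s hs
  have hsrsa : star sr = sr := (IsSelfAdjoint.of_nonneg (CFC.sqrt_nonneg s)).star_eq
  have hssa : star s = s := (IsSelfAdjoint.of_nonneg hs).star_eq
  set b : Matrix (Fin n) (Fin n) B := Matrix.single i0 i0 s with hbdef
  have hbsa : star b = b := by rw [hbdef, stdBasis_star, hssa]
  -- choose k₀ such that the error is small
  have hcont : Continuous fun m : Matrix (Fin n) (Fin n) B => matN (p - p * m * p) :=
    matN_continuous.comp (continuous_const.sub
      ((continuous_const.matrix_mul continuous_id).matrix_mul continuous_const))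
  have hppp : p - p * p * p = (0 : Matrix (Fin n) (Fin n) B) := by
    rw [hpidem, hpidem, sub_self]
  have htend0 : Tendsto (fun k => matN (p - p * (d k * b * star (d k)) * p)) atTop (𝓝 0) := by
    have h1 := (hcont.tendsto p).comp hd
    simp only [Function.comp_def] at h1
    rw [hppp, matN_zero] at h1
    exact h1
  obtain ⟨k₀, hk₀⟩ := (htend0.eventually_lt_const (show (0 : ℝ) < 1/5 by norm_num)).exists
  set cc : Matrix (Fin n) (Fin n) B := d k₀ * b * star (d k₀) with hccdef
  set e : Matrix (Fin n) (Fin n) B := p - p * cc * p with hedef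
  have hηN : matN e ≤ 1/5 := hk₀.le
  have hcsa : star cc = cc := by
    rw [hccdef, StarMul.star_mul, star_star, StarMul.star_mul, hbsa, ← mul_assoc]
  have hesa : star e = e := by
    rw [hedef, star_sub, StarMul.star_mul, StarMul.star_mul, hpsa, hcsa, ← mul_assoc]
  have hep : e * p = e := by
    rw [hedef, sub_mul, hpidem, mul_assoc (p * cc) p p, hpidem]
  have hpe : p * e = e := by
    rw [hedef, mul_sub, hpidem, ← mul_assoc, ← mul_assoc, hpidem]
  -- first fixed point: the "geometric series" ζ with (1 - e)⁻¹ = 1 + ζ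
  set S₁ : Set (Matrix (Fin n) (Fin n) B) :=
    {z | matN z ≤ 1/4 ∧ star z = z ∧ z * e = e * z ∧ z * p = p * z} with hS₁def
  have hFS₁ : ∀ z ∈ S₁, (e * z + e) ∈ S₁ := by
    rintro z ⟨hzN, hzsa, hze, hzp⟩
    refine ⟨?_, ?_, ?_, ?_⟩
    · have h1 : matN (e * z + e) ≤ matN e * matN z + matN e :=
        (matN_add_le _ _).trans (by gcongr; exact matN_mul_le _ _)
      have h2 : matN e * matN z ≤ (1/5) * (1/4) :=
        mul_le_mul hηN hzN (matN_nonneg _) (by norm_num)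
      linarith
    · rw [star_add, StarMul.star_mul, hesa, hzsa, hze]
    · rw [add_mul, mul_add, mul_assoc e z e, hze]
    · rw [add_mul, mul_add, mul_assoc e z p, hzp, ← mul_assoc e p z, hep, ← mul_assoc p e z, hpe]
  have hlip₁ : ∀ z ∈ S₁, ∀ z' ∈ S₁,
      matN ((e * z + e) - (e * z' + e)) ≤ (1/5) * matN (z - z') := by
    intro z _ z' _
    have heq : (e * z + e) - (e * z' + e) = e * (z - z') := by
      rw [add_sub_add_right_eq_sub, ← mul_sub]
    rw [heq]
    exact (matN_mul_le _ _).trans (mul_le_mul_of_nonneg_right hηN (matN_nonneg _))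
  obtain ⟨ζ, hζS, hζfix⟩ := exists_matrix_fixedPoint S₁ (isClosed_goodSet _ _ _)
    ⟨by rw [matN_zero]; norm_num, star_zero _, by rw [zero_mul, mul_zero],
      by rw [zero_mul, mul_zero]⟩
    (fun z => e * z + e)
    ((continuous_const.matrix_mul continuous_id).add continuous_const)
    hFS₁ (1/5) (by norm_num) (by norm_num) hlip₁
  obtain ⟨hζN, hζsa, hζe, hζp⟩ := hζS
  -- second fixed point: the square root 1 + m of 1 + ζ
  set S₂ : Set (Matrix (Fin n) (Fin n) B) :=
    {z | matN z ≤ 1/4 ∧ star z = z ∧ z * ζ = ζ * z ∧ z * p = p * z} with hS₂def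
  have hhalf : ‖(2⁻¹ : ℂ)‖ = 1/2 := by
    rw [norm_inv]
    norm_num
  have hstarhalf : star (2⁻¹ : ℂ) = (2⁻¹ : ℂ) := by
    simp
  have hFS₂ : ∀ z ∈ S₂, ((2⁻¹ : ℂ) • (ζ - z * z)) ∈ S₂ := by
    rintro z ⟨hzN, hzsa, hzζ, hzp⟩
    refine ⟨?_, ?_, ?_, ?_⟩
    · rw [matN_smul, hhalf]
      have h1 : matN (ζ - z * z) ≤ matN ζ + matN (z * z) := matN_sub_le _ _
      have h2 : matN (z * z) ≤ matN z * matN z := matN_mul_le _ _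
      have h3 : matN z * matN z ≤ (1/4) * (1/4) :=
        mul_le_mul hzN hzN (matN_nonneg _) (by norm_num)
      nlinarith [matN_nonneg (ζ - z * z)]
    · rw [star_smul, hstarhalf, star_sub, StarMul.star_mul, hzsa, hζsa]
    · rw [Matrix.smul_mul, Matrix.mul_smul]
      congr 1
      rw [sub_mul, mul_sub, mul_assoc z z ζ, hzζ, ← mul_assoc z ζ z, hzζ, mul_assoc ζ z z]
    · rw [Matrix.smul_mul, Matrix.mul_smul]
      congr 1
      rw [sub_mul, mul_sub, mul_assoc z z p, hzp, ← mul_assoc z p z, hzp, mul_assoc p z z, hζp]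
  have hlip₂ : ∀ z ∈ S₂, ∀ z' ∈ S₂,
      matN ((2⁻¹ : ℂ) • (ζ - z * z) - (2⁻¹ : ℂ) • (ζ - z' * z')) ≤ (1/2) * matN (z - z') := by
    rintro z ⟨hzN, _, _, _⟩ z' ⟨hz'N, _, _, _⟩
    have heq : (2⁻¹ : ℂ) • (ζ - z * z) - (2⁻¹ : ℂ) • (ζ - z' * z') =
        (2⁻¹ : ℂ) • (z' * z' - z * z) := by
      rw [← smul_sub, sub_sub_sub_cancel_left]
    have heq2 : z' * z' - z * z = z' * (z' - z) + (z' - z) * z := by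
      rw [mul_sub, sub_mul, sub_add_sub_cancel]
    rw [heq, heq2, matN_smul, hhalf]
    have h1 : matN (z' * (z' - z) + (z' - z) * z) ≤
        matN z' * matN (z' - z) + matN (z' - z) * matN z :=
      (matN_add_le _ _).trans (add_le_add (matN_mul_le _ _) (matN_mul_le _ _))
    have h2 : matN (z' - z) = matN (z - z') := matN_sub_rev _ _
    have h3 : matN z' * matN (z' - z) ≤ (1/4) * matN (z - z') := by
      rw [h2]
      exact mul_le_mul_of_nonneg_right hz'N (matN_nonneg _)
    have h4 : matN (z' - z) * matN z ≤ matN (z - z') * (1/4) := by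
      rw [h2]
      exact mul_le_mul_of_nonneg_left hzN (matN_nonneg _)
    nlinarith [matN_nonneg (z - z')]
  obtain ⟨m, hmS, hmfix⟩ := exists_matrix_fixedPoint S₂ (isClosed_goodSet _ _ _)
    ⟨by rw [matN_zero]; norm_num, star_zero _, by rw [zero_mul, mul_zero],
      by rw [zero_mul, mul_zero]⟩
    (fun z => (2⁻¹ : ℂ) • (ζ - z * z))
    (((continuous_const.sub (continuous_id.matrix_mul continuous_id) :
      Continuous fun z : Matrix (Fin n) (Fin n) B => ζ - z * z)).const_smul (2⁻¹ : ℂ))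
    hFS₂ (1/2) (by norm_num) (by norm_num) hlip₂
  obtain ⟨hmN, hmsa, hmζ, hmp⟩ := hmS
  have hm2 : m + m + m * m = ζ := by
    have h2 : ζ - m * m = m + m := by
      calc ζ - m * m = ((2 : ℂ) * (2⁻¹ : ℂ)) • (ζ - m * m) := by norm_num
        _ = (2 : ℂ) • ((2⁻¹ : ℂ) • (ζ - m * m)) := by rw [← smul_smul]
        _ = (2 : ℂ) • m := by rw [hmfix]
        _ = m + m := two_smul ℂ m
    exact (sub_eq_iff_eq_add.mp h2).symm
  -- the partial isometry ingredients
  set r : Matrix (Fin n) (Fin n) B := Matrix.single i0 i0 sr with hrdef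
  have hrsa : star r = r := by rw [hrdef, stdBasis_star, hsrsa]
  have hrr : r * r = b := by
    rw [hrdef, Matrix.single_mul_single_same, hsrmul, hbdef]
  set w : Matrix (Fin n) (Fin n) B := r * star (d k₀) with hwdef
  have hstarw : star w = d k₀ * r := by rw [hwdef, StarMul.star_mul, star_star, hrsa]
  have hw : star w * w = cc := by
    rw [hstarw, hwdef, hccdef, mul_assoc (d k₀) r (r * star (d k₀)),
      ← mul_assoc r r (star (d k₀)), hrr, ← mul_assoc]
  -- the core computation
  obtain ⟨fact1, fact2, fact3⟩ := unitization_calc p cc e ζ m w hpidem hpsa hedef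
    hζfix hζe hmζ hmp hmsa hm2 hw
  set x : Matrix (Fin n) (Fin n) B := w * p + w * p * m with hxdef
  set g : Matrix (Fin n) (Fin n) B := p + p * ζ * p with hgdef
  -- the corner form of x * star x
  set q : B := sr * ((star (d k₀) * g * d k₀) i0 i0) * sr with hqdef
  have hxx : x * star x = Matrix.single i0 i0 q := by
    calc x * star x = w * g * star w := fact2
      _ = (r * star (d k₀)) * g * (d k₀ * r) := by rw [hwdef, hstarw]
      _ = (r * (star (d k₀) * g)) * (d k₀ * r) := by rw [mul_assoc r (star (d k₀)) g]
      _ = ((r * (star (d k₀) * g)) * d k₀) * r := by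
          rw [← mul_assoc (r * (star (d k₀) * g)) (d k₀) r]
      _ = (r * (star (d k₀) * g * d k₀)) * r := by rw [mul_assoc r (star (d k₀) * g) (d k₀)]
      _ = Matrix.single i0 i0 q := by rw [hrdef, corner_mul, hqdef]
  -- q is self-adjoint
  have hxxsa : star (x * star x) = x * star x := by rw [StarMul.star_mul, star_star]
  have hstdq : Matrix.single i0 i0 (star q) = Matrix.single i0 i0 q := by
    rw [← stdBasis_star, ← hxx, hxxsa, hxx]
  have hqsa : star q = q := by
    have := congrFun (congrFun hstdq i0) i0
    simpa [Matrix.single_apply_same] using this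
  -- q is idempotent
  have hxpx : (x * star x) * (x * star x) = x * star x := by
    calc (x * star x) * (x * star x) = x * ((star x * x) * star x) := by
          simp only [mul_assoc]
      _ = x * (p * star x) := by rw [fact1]
      _ = (x * p) * star x := by rw [← mul_assoc]
      _ = x * star x := by rw [fact3]
  have hstdq2 : Matrix.single i0 i0 (q * q) = Matrix.single i0 i0 q := by
    rw [← Matrix.single_mul_single_same (j := i0), ← hxx, hxpx, hxx]
  have hqidem : q * q = q := by
    have := congrFun (congrFun hstdq2 i0) i0
    simpa [Matrix.single_apply_same] using this
  exact ⟨x, q, hqsa, hqidem, fact1, hxx⟩
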